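/- Generalized fault model necessity: suppose CPA-G is correct in G, meaning for every feasible fault set F (i.e., F ⊆ F* for some F* ∈ 𝓕) playing crashed, every node outside F eventually commits. Then for every partition (F, L, R) of V with s ∈ L, R nonempty, and F a feasible fault set, either there exists v ∈ R whose set of in-neighbors in L is not contained in any F* ∈ 𝓕, or R contains an out-neighbor of s. -/

import Mathlib

open Finset

variable {α : Type*}

/-- Incoming neighbors of `v` in the directed graph with edge relation `E`. -/
def inN [Fintype α] [DecidableEq α] (E : α → α → Prop) [DecidableRel E] (v : α) : Finset α :=
  univ.filter (fun u => E u v)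

/-- Outgoing neighbors of `v`. -/
def outN [Fintype α] [DecidableEq α] (E : α → α → Prop) [DecidableRel E] (v : α) : Finset α :=
  univ.filter (fun u => E v u)

/-- `F` is a feasible `f`-local fault set: every node outside `F` has at most `f`
incoming neighbors inside `F`. -/
def feasibleLocal [Fintype α] [DecidableEq α] (E : α → α → Prop) [DecidableRel E]
    (f : ℕ) (F : Finset α) : Prop :=
  ∀ v, v ∉ F → (inN E v ∩ F).card ≤ f

/-- The CPA graph condition: for every partition `(F, L, R)` of the vertex set with
`s ∈ L`, `R` nonempty and `F` a feasible `f`-local fault set, either some node of `R`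
has at least `f+1` in-neighbors in `L`, or `R` contains an out-neighbor of `s`. -/
def cpaCond [Fintype α] [DecidableEq α] (E : α → α → Prop) [DecidableRel E]
    (f : ℕ) (s : α) : Prop :=
  ∀ F L R : Finset α, Disjoint F L → Disjoint F R → Disjoint L R →
    F ∪ L ∪ R = univ → s ∈ L → R.Nonempty → feasibleLocal E f F →
    (∃ v ∈ R, f + 1 ≤ (inN E v ∩ L).card) ∨ (outN E s ∩ R).Nonempty

/-- CPA propagation sequence: `L₀ = {s} ∪ (N⁺(s) \ F')`,
`L_{k+1} = L_k ∪ { v ∈ V − F' − L_k : |N⁻(v) ∩ L_k| ≥ f+1 }`. -/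
def cpaSeq [Fintype α] [DecidableEq α] (E : α → α → Prop) [DecidableRel E]
    (f : ℕ) (s : α) (F' : Finset α) : ℕ → Finset α
  | 0 => insert s (outN E s \ F')
  | k + 1 => cpaSeq E f s F' k ∪
      ((univ \ F') \ cpaSeq E f s F' k).filter
        (fun v => f + 1 ≤ (inN E v ∩ cpaSeq E f s F' k).card)

/-- F is a feasible fault set for the fault domain 𝓕. -/
def feasibleG [DecidableEq α] (𝓕 : Finset (Finset α)) (F : Finset α) : Prop :=
  ∃ Fstar ∈ 𝓕, F ⊆ Fstar

instance [DecidableEq α] (𝓕 : Finset (Finset α)) (F : Finset α) :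
    Decidable (feasibleG 𝓕 F) :=
  inferInstanceAs (Decidable (∃ Fstar ∈ 𝓕, F ⊆ Fstar))

/-- CPA-G closure of {s}: add v ∉ F once (s,v) ∈ E or the set of its already-added
in-neighbors (outside F) is not a feasible fault set. -/
def cpagSeq [Fintype α] [DecidableEq α] (E : α → α → Prop) [DecidableRel E]
    (𝓕 : Finset (Finset α)) (s : α) (F : Finset α) : ℕ → Finset α
  | 0 => {s}
  | k + 1 => cpagSeq E 𝓕 s F k ∪
      ((univ \ F) \ cpagSeq E 𝓕 s F k).filter
        (fun v => E s v ∨ ¬ feasibleG 𝓕 (inN E v ∩ cpagSeq E 𝓕 s F k))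

/-- generalized fault model, necessity: if CPA-G is correct (the
closure of {s} covers V − F for every feasible fault set F avoiding s), then for
every partition (F, L, R) with s ∈ L, R nonempty and F feasible, either some v ∈ R
has N⁻(v) ∩ L not feasible, or R contains an out-neighbor of s. -/
theorem stmt11 [Fintype α] [DecidableEq α] (E : α → α → Prop) [DecidableRel E]
    (hirr : ∀ v, ¬ E v v) (𝓕 : Finset (Finset α)) (s : α)
    (hcorrect : ∀ F : Finset α, feasibleG 𝓕 F → s ∉ F →
      ∃ k, cpagSeq E 𝓕 s F k = univ \ F) :
    ∀ F L R : Finset α, Disjoint F L → Disjoint F R → Disjoint L R →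
      F ∪ L ∪ R = univ → s ∈ L → R.Nonempty → feasibleG 𝓕 F →
      (∃ v ∈ R, ¬ feasibleG 𝓕 (inN E v ∩ L)) ∨ (outN E s ∩ R).Nonempty := by
  intro F L R hFL hFR hLR hpart hsL hR hfeas
  by_contra hcon
  push_neg at hcon
  obtain ⟨h1, h2⟩ := hcon
  have hsF : s ∉ F := fun h => (disjoint_left.mp hFL) h hsL
  -- every cpagSeq stays in L
  have hsub : ∀ k, cpagSeq E 𝓕 s F k ⊆ L := by
    intro k
    induction k with
    | zero => simpa [cpagSeq] using hsL
    | succ k ih =>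
      intro v hv
      simp only [cpagSeq, mem_union, mem_filter, mem_sdiff, mem_univ, true_and] at hv
      rcases hv with hv | ⟨⟨hvF, _⟩, hcond⟩
      · exact ih hv
      · -- v ∉ F, so v ∈ L ∪ R
        have hvLR : v ∈ L ∪ R := by
          have : v ∈ F ∪ L ∪ R := hpart ▸ mem_univ v
          simp only [mem_union] at this ⊢
          tauto
        rcases mem_union.mp hvLR with hvL | hvR
        · exact hvL
        · exfalso
          rcases hcond with hEs | hnf
          · exact (nonempty_iff_ne_empty (s := outN E s ∩ R)).mp ⟨v, mem_inter.mpr ⟨by simp [outN, hEs], hvR⟩⟩ h2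
          · apply hnf
            obtain ⟨Fstar, hFstar, hss⟩ := h1 v hvR
            exact ⟨Fstar, hFstar, fun u hu => hss (mem_inter.mpr
              ⟨(mem_inter.mp hu).1, ih (mem_inter.mp hu).2⟩)⟩
  obtain ⟨k, hk⟩ := hcorrect F hfeas hsF
  obtain ⟨r, hr⟩ := hR
  have hrL : r ∈ L := hsub k (hk ▸ mem_sdiff.mpr ⟨mem_univ r, fun h => (disjoint_left.mp hFR) h hr⟩)
  exact (disjoint_left.mp hLR) hrL hr
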